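/- For every n ∈ ℕ, ∫₀¹ U_n(x)² dx = ∑_{k=0}^{n} 1/(2k+1) = (1/2)(ψ(n + 3/2) + γ + log 4), where ψ is the digamma function and γ the Euler–Mascheroni constant. -/

import Mathlib

open Polynomial Real

lemma U_add_eq (m k : ℤ) :
    Polynomial.Chebyshev.U ℝ (m + k) =
      Polynomial.Chebyshev.U ℝ m * Polynomial.Chebyshev.U ℝ k -
      Polynomial.Chebyshev.U ℝ (m - 1) * Polynomial.Chebyshev.U ℝ (k - 1) := by
  induction k using Polynomial.Chebyshev.induct with
  | zero => simp [Polynomial.Chebyshev.U_neg_one]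
  | one =>
    simp only [Polynomial.Chebyshev.U_one, show (1:ℤ)-1 = 0 by norm_num,
      Polynomial.Chebyshev.U_zero, Polynomial.Chebyshev.U_add_one]
    ring
  | add_two k ih1 ih2 =>
    have h1 := Polynomial.Chebyshev.U_add_two ℝ (m + k)
    have h2 := Polynomial.Chebyshev.U_add_two ℝ (k : ℤ)
    have h3 := Polynomial.Chebyshev.U_add_one ℝ (k : ℤ)
    linear_combination (norm := ring_nf) h1 + 2 * Polynomial.X (R := ℝ) * ih1 - ih2 -
      Polynomial.Chebyshev.U ℝ m * h2 + Polynomial.Chebyshev.U ℝ (m - 1) * h3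
  | neg_add_one k ih1 ih2 =>
    have h1 := Polynomial.Chebyshev.U_sub_one ℝ (m + -(k : ℤ))
    have h3 := Polynomial.Chebyshev.U_sub_one ℝ (-(k : ℤ))
    have h4 := Polynomial.Chebyshev.U_sub_two ℝ (-(k : ℤ))
    linear_combination (norm := ring_nf) h1 + 2 * Polynomial.X (R := ℝ) * ih1 - ih2 -
      Polynomial.Chebyshev.U ℝ m * h3 + Polynomial.Chebyshev.U ℝ (m - 1) * h4

lemma log_four_eq : Real.log 4 = 2 * Real.log 2 := by
  rw [show (4:ℝ) = 2 ^ 2 by norm_num, Real.log_pow]; push_cast; ring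

lemma intU (k : ℕ) :
    ∫ x in (0:ℝ)..1, (Polynomial.Chebyshev.U ℝ (2 * k)).eval x = 1 / (2 * (k:ℝ) + 1) := by
  have hd : ∀ x : ℝ, HasDerivAt (fun y => (Polynomial.Chebyshev.T ℝ (2 * k + 1)).eval y)
      ((2 * (k:ℝ) + 1) * (Polynomial.Chebyshev.U ℝ (2 * k)).eval x) x := by
    intro x
    have h := (Polynomial.Chebyshev.T ℝ (2 * (k:ℤ) + 1)).hasDerivAt x
    rw [Polynomial.Chebyshev.T_derivative_eq_U] at h
    simpa [Polynomial.eval_intCast] using h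
  have hint : ∫ x in (0:ℝ)..1, (2 * (k:ℝ) + 1) * (Polynomial.Chebyshev.U ℝ (2 * k)).eval x =
      (Polynomial.Chebyshev.T ℝ (2 * k + 1)).eval 1 -
      (Polynomial.Chebyshev.T ℝ (2 * k + 1)).eval 0 := by
    apply intervalIntegral.integral_eq_sub_of_hasDerivAt (fun x _ => hd x)
    exact (((Polynomial.Chebyshev.U ℝ (2 * k)).continuous_aeval).const_smul
      (2 * (k:ℝ) + 1)).intervalIntegrable 0 1
  have h1 : (Polynomial.Chebyshev.T ℝ (2 * (k:ℤ) + 1)).eval 1 = 1 := by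
    have := Polynomial.Chebyshev.T_real_cos 0 (2 * (k:ℤ) + 1)
    simpa using this
  have h0 : (Polynomial.Chebyshev.T ℝ (2 * (k:ℤ) + 1)).eval 0 = 0 := by
    have h := Polynomial.Chebyshev.T_real_cos (Real.pi / 2) (2 * (k:ℤ) + 1)
    rw [Real.cos_pi_div_two] at h
    rw [h]
    push_cast
    rw [show (2 * (k:ℝ) + 1) * (Real.pi / 2) = (k:ℝ) * Real.pi + Real.pi / 2 by ring,
      Real.cos_add, Real.cos_pi_div_two, Real.sin_pi_div_two, Real.sin_nat_mul_pi]
    ring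
  rw [intervalIntegral.integral_const_mul] at hint
  have hpos : (2 * (k:ℝ) + 1) ≠ 0 := by positivity
  rw [h1, h0] at hint
  field_simp
  linarith [hint]

lemma hasDerivAt_Gamma_half (n : ℕ) :
    HasDerivAt Real.Gamma (Real.Gamma ((n:ℝ) + 1/2) *
      (2 * ∑ k ∈ Finset.range n, 1 / (2 * (k:ℝ) + 1)
        - Real.eulerMascheroniConstant - Real.log 4)) ((n:ℝ) + 1/2) := by
  induction n with
  | zero =>
    have h := Real.hasDerivAt_Gamma_one_half
    have he : ((0:ℕ):ℝ) + 1/2 = 1/2 := by norm_num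
    rw [he, Finset.range_zero, Finset.sum_empty]
    convert h using 1
    rw [Real.Gamma_one_half_eq, _root_.log_four_eq]
    ring
  | succ n ih =>
    have hx : (0:ℝ) < (n:ℝ) + 1/2 := by positivity
    set x : ℝ := (n:ℝ) + 1/2 with hxdef
    set d : ℝ := Real.Gamma x * (2 * ∑ k ∈ Finset.range n, 1 / (2 * (k:ℝ) + 1)
        - Real.eulerMascheroniConstant - Real.log 4) with hd
    have h1 : HasDerivAt (fun y : ℝ => y * Real.Gamma y) (1 * Real.Gamma x + x * d) x :=
      (hasDerivAt_id x).mul ih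
    have h1' : HasDerivAt (fun y : ℝ => y * Real.Gamma y) (1 * Real.Gamma x + x * d)
        (x + 1 - 1) := by rw [add_sub_cancel_right]; exact h1
    have h2 : HasDerivAt (fun y : ℝ => (y - 1) * Real.Gamma (y - 1))
        ((1 * Real.Gamma x + x * d) * 1) (x + 1) := by
      have := h1'.comp (x + 1) ((hasDerivAt_id (x+1)).sub_const 1)
      simpa [Function.comp_def] using this
    have heq : ∀ᶠ y in nhds (x + 1), (y - 1) * Real.Gamma (y - 1) = Real.Gamma y := by
      filter_upwards [eventually_gt_nhds (show (1:ℝ) < x + 1 by linarith)] with y hy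
      rw [show Real.Gamma y = Real.Gamma ((y - 1) + 1) by ring_nf,
        Real.Gamma_add_one (by linarith)]
    have h3 : HasDerivAt Real.Gamma ((1 * Real.Gamma x + x * d) * 1) (x + 1) :=
      h2.congr_of_eventuallyEq (heq.mono fun y hy => hy.symm)
    have hcast : ((n+1 : ℕ):ℝ) + 1/2 = x + 1 := by push_cast; ring
    rw [hcast]
    convert h3 using 1
    rw [show x + 1 = x + 1 by rfl, Real.Gamma_add_one (ne_of_gt hx), hd,
      Finset.sum_range_succ]
    have h2n : (2 * (n:ℝ) + 1) ≠ 0 := by positivity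
    field_simp
    ring

lemma key_int (n : ℕ) : (∫ x in (0 : ℝ)..1, ((Polynomial.Chebyshev.U ℝ n).eval x) ^ 2)
    = ∑ k ∈ Finset.range (n + 1), 1 / (2 * (k : ℝ) + 1) := by
  induction n with
  | zero => simp [Polynomial.Chebyshev.U_zero]
  | succ n ih =>
    have hpoly : Polynomial.Chebyshev.U ℝ (2 * ((n:ℤ) + 1)) =
        (Polynomial.Chebyshev.U ℝ ((n:ℤ) + 1)) ^ 2 - (Polynomial.Chebyshev.U ℝ (n:ℤ)) ^ 2 := by
      have h := U_add_eq ((n:ℤ) + 1) ((n:ℤ) + 1)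
      rw [show (n:ℤ) + 1 + ((n:ℤ) + 1) = 2 * ((n:ℤ) + 1) by ring,
        show (n:ℤ) + 1 - 1 = (n:ℤ) by ring] at h
      rw [h]; ring
    have hpt : ∀ x : ℝ, ((Polynomial.Chebyshev.U ℝ ((n:ℤ) + 1)).eval x) ^ 2
        = ((Polynomial.Chebyshev.U ℝ (n:ℤ)).eval x) ^ 2
          + (Polynomial.Chebyshev.U ℝ (2 * ((n:ℤ) + 1))).eval x := by
      intro x
      have h := congrArg (Polynomial.eval x) hpoly
      simp only [Polynomial.eval_sub, Polynomial.eval_pow] at h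
      linarith
    have hcast : ((n + 1 : ℕ) : ℤ) = (n:ℤ) + 1 := by push_cast; ring
    rw [hcast]
    calc (∫ x in (0 : ℝ)..1, ((Polynomial.Chebyshev.U ℝ ((n:ℤ) + 1)).eval x) ^ 2)
        = ∫ x in (0 : ℝ)..1, (((Polynomial.Chebyshev.U ℝ (n:ℤ)).eval x) ^ 2
          + (Polynomial.Chebyshev.U ℝ (2 * ((n:ℤ) + 1))).eval x) := by
          simp only [hpt]
      _ = (∫ x in (0 : ℝ)..1, ((Polynomial.Chebyshev.U ℝ (n:ℤ)).eval x) ^ 2)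
          + ∫ x in (0 : ℝ)..1, (Polynomial.Chebyshev.U ℝ (2 * ((n:ℤ) + 1))).eval x := by
          apply intervalIntegral.integral_add
          · exact ((Polynomial.continuous _).pow 2).intervalIntegrable 0 1
          · exact (Polynomial.continuous _).intervalIntegrable 0 1
      _ = ∑ k ∈ Finset.range (n + 1 + 1), 1 / (2 * (k : ℝ) + 1) := by
          have hi := intU (n + 1)
          rw [show (2 * ((n + 1 : ℕ) : ℤ)) = 2 * ((n:ℤ) + 1) by push_cast; ring] at hi
          rw [ih, hi, Finset.sum_range_succ (f := fun k => 1 / (2 * (k:ℝ) + 1)) (n := n+1)]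

/-- The digamma function `ψ(x) = d/dx log Γ(x)`. -/
noncomputable def digamma (x : ℝ) : ℝ := deriv (fun y => Real.log (Real.Gamma y)) x

theorem integral_chebyshevU_sq (n : ℕ) :
    (∫ x in (0 : ℝ)..1, ((Polynomial.Chebyshev.U ℝ n).eval x) ^ 2)
        = ∑ k ∈ Finset.range (n + 1), 1 / (2 * (k : ℝ) + 1) ∧
    (∫ x in (0 : ℝ)..1, ((Polynomial.Chebyshev.U ℝ n).eval x) ^ 2)
        = (1 / 2) * (digamma ((n : ℝ) + 3 / 2) + Real.eulerMascheroniConstant + Real.log 4) := by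
  refine ⟨key_int n, ?_⟩
  have hdig : digamma ((n : ℝ) + 3 / 2)
      = 2 * ∑ k ∈ Finset.range (n + 1), 1 / (2 * (k : ℝ) + 1)
        - Real.eulerMascheroniConstant - Real.log 4 := by
    have h := hasDerivAt_Gamma_half (n + 1)
    have hx : (0:ℝ) < ((n + 1 : ℕ) : ℝ) + 1/2 := by positivity
    have hΓ : Real.Gamma (((n + 1 : ℕ) : ℝ) + 1/2) ≠ 0 := (Real.Gamma_pos_of_pos hx).ne'
    have h2 := (h.log hΓ).deriv
    have hpt : ((n + 1 : ℕ) : ℝ) + 1/2 = (n : ℝ) + 3/2 := by push_cast; ring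
    rw [digamma, ← hpt, h2, mul_comm, mul_div_assoc, div_self hΓ, mul_one]
  rw [key_int n, hdig]
  ring
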